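/- The map sending a permutation w in S_n with descents only in positions k_1 < ... < k_{d-1} to its code c_w (where (c_w)_i = #{ j : i < j ≤ n, w(i) > w(j) }) is a bijection onto the set of vectors c = (c_1,...,c_{n-1}) of nonnegative integers with c_j ≤ n - j for all j, such that c_j > c_{j+1} only when j and j+1 lie in different intervals I_i = [k_{i-1}+1, k_i] (with k_0 = 0, k_d = n, and c_n := 0). -/

import Mathlib

open Finset

namespace Stmt0Aux

variable {n : ℕ}

/-- The Lehmer code of a permutation. -/
def fcode (w : Equiv.Perm (Fin n)) (i : Fin n) : ℕ :=
  (Finset.univ.filter (fun j : Fin n => i < j ∧ w j < w i)).card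

lemma fcode_le (w : Equiv.Perm (Fin n)) (i : Fin n) : fcode w i ≤ n - 1 - (i : ℕ) := by
  have : (Finset.univ.filter (fun j : Fin n => i < j ∧ w j < w i)) ⊆ Finset.Ioi i := by
    intro j hj
    simp only [mem_filter] at hj
    simpa using hj.2.1
  calc fcode w i ≤ (Finset.Ioi i).card := Finset.card_le_card this
    _ = n - 1 - (i : ℕ) := Fin.card_Ioi i

lemma fcode_succ_lt (w : Equiv.Perm (Fin n)) (i : Fin n) (h : (i : ℕ) + 1 < n)
    (hd : w ⟨(i : ℕ) + 1, h⟩ < w i) : fcode w ⟨(i : ℕ) + 1, h⟩ < fcode w i := by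
  set i' : Fin n := ⟨(i : ℕ) + 1, h⟩ with hi'
  apply Finset.card_lt_card
  constructor
  · intro j hj
    simp only [mem_filter, Fin.lt_def] at hj ⊢
    exact ⟨Finset.mem_univ _, by have : ((⟨(i : ℕ) + 1, h⟩ : Fin n) : ℕ) = (i : ℕ) + 1 := rfl; omega, hj.2.2.trans hd⟩
  · intro hsub
    have : i' ∈ Finset.univ.filter (fun j : Fin n => i < j ∧ w j < w i) := by
      simp only [mem_filter, Fin.lt_def]
      exact ⟨Finset.mem_univ _, by have : ((⟨(i : ℕ) + 1, h⟩ : Fin n) : ℕ) = (i : ℕ) + 1 := rfl; omega, hd⟩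
    have := hsub this
    simp only [mem_filter, Fin.lt_def] at this
    omega

lemma fcode_succ_le (w : Equiv.Perm (Fin n)) (i : Fin n) (h : (i : ℕ) + 1 < n)
    (hd : w i < w ⟨(i : ℕ) + 1, h⟩) : fcode w i ≤ fcode w ⟨(i : ℕ) + 1, h⟩ := by
  set i' : Fin n := ⟨(i : ℕ) + 1, h⟩ with hi'
  apply Finset.card_le_card
  intro j hj
  simp only [mem_filter, Fin.lt_def] at hj ⊢
  refine ⟨Finset.mem_univ _, ?_, hj.2.2.trans hd⟩
  rcases hj with ⟨-, h1, h2⟩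
  have : (j : ℕ) ≠ (i : ℕ) + 1 := by
    intro he
    have : j = i' := Fin.ext he
    subst this
    exact absurd hd (by omega)
  have : ((⟨(i : ℕ) + 1, h⟩ : Fin n) : ℕ) = (i : ℕ) + 1 := rfl; omega

/-- descent iff code descent -/
lemma descent_iff (w : Equiv.Perm (Fin n)) (i : Fin n) (h : (i : ℕ) + 1 < n) :
    w ⟨(i : ℕ) + 1, h⟩ < w i ↔ fcode w ⟨(i : ℕ) + 1, h⟩ < fcode w i := by
  constructor
  · exact fcode_succ_lt w i h
  · intro hc
    by_contra hnd
    have hne : w i ≠ w ⟨(i : ℕ) + 1, h⟩ := by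
      intro he
      have := w.injective he
      simp only [Fin.ext_iff] at this
      omega
    have : w i < w ⟨(i : ℕ) + 1, h⟩ := lt_of_le_of_ne (not_lt.mp hnd) hne
    exact absurd (fcode_succ_le w i h this) (by omega)

/-- `w i = #{j < i : w j < w i} + fcode w i`. -/
lemma val_eq (w : Equiv.Perm (Fin n)) (i : Fin n) :
    (w i : ℕ) = (Finset.univ.filter (fun j : Fin n => j < i ∧ w j < w i)).card + fcode w i := by
  have h1 : (Finset.univ.filter (fun j : Fin n => w j < w i)).card = (w i : ℕ) := by
    rw [← Fin.card_Iio (w i)]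
    apply Finset.card_bij (fun j _ => w j)
    · intro a ha; simp only [mem_filter] at ha; simpa using ha.2
    · intro a _ b _ hab; exact w.injective hab
    · intro b hb
      refine ⟨w.symm b, ?_, by simp⟩
      simp only [mem_filter, Finset.mem_univ, true_and]
      simpa using hb
  have h2 : (Finset.univ.filter (fun j : Fin n => w j < w i)) =
      (Finset.univ.filter (fun j : Fin n => j < i ∧ w j < w i)) ∪
      (Finset.univ.filter (fun j : Fin n => i < j ∧ w j < w i)) := by
    rw [← Finset.filter_or]
    apply Finset.filter_congr
    intro j _
    constructor
    · intro hj
      rcases lt_trichotomy j i with hlt | heq | hgt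
      · exact Or.inl ⟨hlt, hj⟩
      · subst heq; exact absurd hj (lt_irrefl _)
      · exact Or.inr ⟨hgt, hj⟩
    · rintro (⟨-, hj⟩ | ⟨-, hj⟩) <;> exact hj
  have h3 : Disjoint (Finset.univ.filter (fun j : Fin n => j < i ∧ w j < w i))
      (Finset.univ.filter (fun j : Fin n => i < j ∧ w j < w i)) := by
    rw [Finset.disjoint_filter]
    rintro j _ ⟨hj, -⟩ ⟨hj', -⟩
    exact absurd (hj.trans hj') (lt_irrefl _)
  rw [← h1, h2, Finset.card_union_of_disjoint h3]
  rfl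

lemma not_lt_aux (w1 w2 : Equiv.Perm (Fin n)) (hc : fcode w1 = fcode w2) (i : Fin n)
    (IH : ∀ j : Fin n, j < i → w1 j = w2 j) : ¬ (w1 i < w2 i) := by
  intro hlt
  set B1 := Finset.univ.filter (fun j : Fin n => j < i ∧ w1 j < w1 i) with hB1
  set B2 := Finset.univ.filter (fun j : Fin n => j < i ∧ w2 j < w2 i) with hB2
  set D := Finset.univ.filter (fun j : Fin n => j < i ∧ w1 i < w2 j ∧ w2 j < w2 i) with hD
  have hne : ∀ j : Fin n, j < i → w2 j ≠ w1 i := by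
    intro j hj he
    rw [← IH j hj] at he
    exact absurd (w1.injective he) (ne_of_lt hj)
  have hsplit : B2 = B1 ∪ D := by
    rw [hB1, hB2, hD, ← Finset.filter_or]
    apply Finset.filter_congr
    intro j _
    constructor
    · rintro ⟨hji, hjv⟩
      have hne' := hne j hji
      rcases lt_or_gt_of_ne hne' with hl | hg
      · exact Or.inl ⟨hji, by rw [IH j hji]; exact hl⟩
      · exact Or.inr ⟨hji, hg, hjv⟩
    · rintro (⟨hji, hjv⟩ | ⟨hji, -, hjv⟩)
      · exact ⟨hji, by rw [← IH j hji]; exact hjv.trans hlt⟩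
      · exact ⟨hji, hjv⟩
  have hdisj : Disjoint B1 D := by
    rw [hB1, hD, Finset.disjoint_filter]
    rintro j _ ⟨hji, hjv⟩ ⟨-, hg, -⟩
    rw [IH j hji] at hjv
    exact absurd (hjv.trans hg) (lt_irrefl _)
  have hcard2 : B2.card = B1.card + D.card := by rw [hsplit, Finset.card_union_of_disjoint hdisj]
  have hv1 := val_eq w1 i
  have hv2 := val_eq w2 i
  rw [← hB1] at hv1
  rw [← hB2] at hv2
  rw [hc] at hv1
  -- card D ≤ w2 i - w1 i - 1
  have hDle : D.card ≤ (Finset.Ioo (w1 i) (w2 i)).card := by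
    apply Finset.card_le_card_of_injOn (fun j => w2 j)
    · intro j hj
      simp only [hD, Finset.mem_coe, mem_filter] at hj
      simp only [Finset.mem_coe, Finset.mem_Ioo]
      exact ⟨hj.2.2.1, hj.2.2.2⟩
    · intro a _ b _ hab
      exact w2.injective hab
  rw [Fin.card_Ioo] at hDle
  have hlt' : (w1 i : ℕ) < (w2 i : ℕ) := hlt
  omega

lemma fcode_injective : Function.Injective (fcode (n := n)) := by
  intro w1 w2 hc
  suffices key : ∀ m : ℕ, ∀ i : Fin n, (i : ℕ) = m → w1 i = w2 i by
    exact Equiv.ext fun i => key i i rfl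
  intro m
  induction m using Nat.strong_induction_on with
  | _ m IHm =>
  intro i him
  have IH : ∀ j : Fin n, j < i → w1 j = w2 j := fun j hj => IHm j (him ▸ hj) j rfl
  rcases lt_trichotomy (w1 i) (w2 i) with h | h | h
  · exact absurd h (not_lt_aux w1 w2 hc i IH)
  · exact h
  · exact absurd h (not_lt_aux w2 w1 hc.symm i (fun j hj => (IH j hj).symm))

lemma prod_fact : (∏ i : Fin n, (n - 1 - (i : ℕ) + 1)) = Nat.factorial n := by
  rw [Fin.prod_univ_eq_prod_range (fun i => n - 1 - i + 1)]
  rw [Finset.prod_range_reflect (fun i => i + 1) n]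
  exact Finset.prod_range_add_one_eq_factorial n

lemma fcode_surjective (c : Fin n → ℕ) (hc : ∀ i : Fin n, c i ≤ n - 1 - (i : ℕ)) :
    ∃ w : Equiv.Perm (Fin n), fcode w = c := by
  classical
  set T := Fintype.piFinset (fun i : Fin n => Finset.Iic (n - 1 - (i : ℕ))) with hT
  have hmem : ∀ w : Equiv.Perm (Fin n), fcode w ∈ T := by
    intro w
    rw [hT, Fintype.mem_piFinset]
    intro i
    rw [Finset.mem_Iic]
    exact fcode_le w i
  set F : Equiv.Perm (Fin n) → {x // x ∈ T} := fun w => ⟨fcode w, hmem w⟩ with hF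
  have hinj : Function.Injective F := by
    intro a b h
    exact fcode_injective (congrArg Subtype.val h)
  have hcard : Fintype.card (Equiv.Perm (Fin n)) = Fintype.card {x // x ∈ T} := by
    rw [Fintype.card_coe, Fintype.card_piFinset]
    simp only [Nat.card_Iic]
    rw [Fintype.card_perm, Fintype.card_fin]
    exact prod_fact.symm
  have hbij : Function.Bijective F := (Fintype.bijective_iff_injective_and_card F).2 ⟨hinj, hcard⟩
  obtain ⟨w, hw⟩ := hbij.2 ⟨c, by rw [hT, Fintype.mem_piFinset]; intro i; rw [Finset.mem_Iic]; exact hc i⟩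
  exact ⟨w, congrArg Subtype.val hw⟩

end Stmt0Aux

theorem stmt0 (n : ℕ) (K : Finset ℕ) (hK : ∀ x ∈ K, 0 < x ∧ x < n) :
    Set.BijOn
      (fun (w : Equiv.Perm (Fin n)) (i : Fin n) =>
        (Finset.univ.filter (fun j : Fin n => i < j ∧ w j < w i)).card)
      {w : Equiv.Perm (Fin n) |
        ∀ i : Fin n, ∀ h : (i : ℕ) + 1 < n, w ⟨(i : ℕ) + 1, h⟩ < w i → (i : ℕ) + 1 ∈ K}
      {c : Fin n → ℕ |
        (∀ i : Fin n, c i ≤ n - 1 - (i : ℕ)) ∧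
        (∀ i : Fin n, ∀ h : (i : ℕ) + 1 < n, c ⟨(i : ℕ) + 1, h⟩ < c i → (i : ℕ) + 1 ∈ K)} := by
  show Set.BijOn (Stmt0Aux.fcode) _ _
  refine ⟨?_, ?_, ?_⟩
  · intro w hw
    refine ⟨fun i => Stmt0Aux.fcode_le w i, ?_⟩
    intro i h hdc
    exact hw i h ((Stmt0Aux.descent_iff w i h).2 hdc)
  · intro a _ b _ hab
    exact Stmt0Aux.fcode_injective hab
  · intro c hc
    obtain ⟨w, hw⟩ := Stmt0Aux.fcode_surjective c hc.1
    refine ⟨w, ?_, hw⟩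
    intro i h hd
    apply hc.2 i h
    rw [← hw]
    exact (Stmt0Aux.descent_iff w i h).1 hd
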